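/- The function u(x) = log₂(1+ax)/(x+c), with constants a > 0 and c > 0, is strictly pseudo-concave on [0,∞), attains its maximum at a unique point x̄ > 0, and is concave on the interval [0, x̄]. -/

import Mathlib

open Set Real

private lemma hderiv_u (a c : ℝ) (ha : 0 < a) (hc : 0 < c) {x : ℝ} (hx : 0 ≤ x) :
    HasDerivAt (fun t => Real.logb 2 (1 + a * t) / (t + c))
      ((a * (x + c) / (1 + a * x) - Real.log (1 + a * x)) / (Real.log 2 * (x + c) ^ 2)) x := by
  have h1 : (0:ℝ) < 1 + a * x := by nlinarith
  have h2 : (0:ℝ) < x + c := by linarith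
  have hl2 : (0:ℝ) < Real.log 2 := Real.log_pos (by norm_num)
  have hlin : HasDerivAt (fun t : ℝ => 1 + a * t) a x := by
    simpa using (hasDerivAt_id x).const_mul a |>.const_add 1
  have hlog : HasDerivAt (fun t : ℝ => Real.log (1 + a * t)) ((1 + a * x)⁻¹ * a) x :=
    by have := (Real.hasDerivAt_log h1.ne').comp x hlin; exact this
  have hnum : HasDerivAt (fun t : ℝ => Real.logb 2 (1 + a * t))
      ((1 + a * x)⁻¹ * a / Real.log 2) x := by
    simp only [Real.logb]
    exact hlog.div_const _
  have hden : HasDerivAt (fun t : ℝ => t + c) 1 x := (hasDerivAt_id x).add_const c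
  have h := hnum.div hden h2.ne'
  refine h.congr_deriv ?_
  simp only [Real.logb]
  field_simp

private lemma hderiv_g (a c : ℝ) (ha : 0 < a) (hc : 0 < c) {x : ℝ} (hx : 0 ≤ x) :
    HasDerivAt (fun t => a * (t + c) / (1 + a * t) - Real.log (1 + a * t))
      (-(a ^ 2 * (x + c)) / (1 + a * x) ^ 2) x := by
  have h1 : (0:ℝ) < 1 + a * x := by nlinarith
  have hlin : HasDerivAt (fun t : ℝ => 1 + a * t) a x := by
    simpa using (hasDerivAt_id x).const_mul a |>.const_add 1
  have hlog : HasDerivAt (fun t : ℝ => Real.log (1 + a * t)) ((1 + a * x)⁻¹ * a) x :=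
    by have := (Real.hasDerivAt_log h1.ne').comp x hlin; exact this
  have hnum : HasDerivAt (fun t : ℝ => a * (t + c)) a x := by
    simpa using ((hasDerivAt_id x).add_const c).const_mul a
  have h := (hnum.div hlin h1.ne').sub hlog
  refine h.congr_deriv ?_
  field_simp [h1.ne']
  ring

/-- Lemma 2 of the paper: `u(x) = log₂(1+ax)/(x+c)` with `a, c > 0` is strictly
pseudo-concave on `[0,∞)`, attains its maximum at a unique point `x̄ > 0`, and
is concave on `[0, x̄]`. -/
theorem stmt_6 (a c : ℝ) (ha : 0 < a) (hc : 0 < c) :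
    (∀ x ∈ Set.Ici (0 : ℝ), ∀ y ∈ Set.Ici (0 : ℝ), x ≠ y →
      deriv (fun t => Real.logb 2 (1 + a * t) / (t + c)) x * (y - x) ≤ 0 →
      Real.logb 2 (1 + a * y) / (y + c) < Real.logb 2 (1 + a * x) / (x + c)) ∧
    (∃ xb : ℝ, 0 < xb ∧
      IsMaxOn (fun t => Real.logb 2 (1 + a * t) / (t + c)) (Set.Ici 0) xb ∧
      ConcaveOn ℝ (Set.Icc 0 xb) (fun t => Real.logb 2 (1 + a * t) / (t + c)) ∧
      (∀ y ∈ Set.Ici (0 : ℝ),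
        IsMaxOn (fun t => Real.logb 2 (1 + a * t) / (t + c)) (Set.Ici 0) y →
        y = xb)) := by
  set u : ℝ → ℝ := fun t => Real.logb 2 (1 + a * t) / (t + c) with hu
  set g : ℝ → ℝ := fun t => a * (t + c) / (1 + a * t) - Real.log (1 + a * t) with hg
  have hl2 : (0:ℝ) < Real.log 2 := Real.log_pos (by norm_num)
  have h1 : ∀ {x : ℝ}, 0 ≤ x → (0:ℝ) < 1 + a * x := fun hx => by nlinarith
  have h2 : ∀ {x : ℝ}, 0 ≤ x → (0:ℝ) < x + c := fun hx => by linarith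
  -- deriv of u
  have hderu : ∀ {x : ℝ}, 0 ≤ x →
      deriv u x = g x / (Real.log 2 * (x + c) ^ 2) := fun hx =>
    (hderiv_u a c ha hc hx).deriv
  -- g is strictly antitone on Ici 0
  have hganti : StrictAntiOn g (Ici 0) := by
    apply strictAntiOn_of_deriv_neg (convex_Ici 0)
    · intro x hx
      exact (hderiv_g a c ha hc hx).continuousAt.continuousWithinAt
    · intro x hx
      rw [interior_Ici] at hx
      rw [(hderiv_g a c ha hc hx.le).deriv]
      have := h1 hx.le
      have := h2 hx.le
      apply div_neg_of_neg_of_pos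
      · have : 0 < a ^ 2 * (x + c) := by positivity
        linarith
      · positivity
  -- g has a root xb > 0
  have hg0 : 0 < g 0 := by
    have : g 0 = a * c := by simp [hg]
    rw [this]; positivity
  obtain ⟨xb, hxbmem, hgxb⟩ : ∃ xb ∈ Ioo (0:ℝ) ((Real.exp (2 + a*c) - 1)/a), g xb = 0 := by
    have hx0 : (0:ℝ) < (Real.exp (2 + a*c) - 1)/a := by
      apply div_pos _ ha
      have : (1:ℝ) < Real.exp (2 + a*c) := by
        rw [← Real.exp_zero]
        apply Real.exp_lt_exp.mpr; positivity
      linarith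
    have hgcont : ContinuousOn g (Icc 0 ((Real.exp (2 + a*c) - 1)/a)) := fun x hx =>
      (hderiv_g a c ha hc hx.1).continuousAt.continuousWithinAt
    have hgneg : g ((Real.exp (2 + a*c) - 1)/a) < 0 := by
      set x0 := (Real.exp (2 + a*c) - 1)/a with hx0def
      have hax0 : 1 + a * x0 = Real.exp (2 + a*c) := by
        rw [hx0def]
        field_simp
        ring
      have hlx0 : Real.log (1 + a * x0) = 2 + a*c := by
        rw [hax0, Real.log_exp]
      have h1x0 := h1 hx0.le
      have h2x0 := h2 hx0.le
      have hb : a * (x0 + c) / (1 + a * x0) ≤ 1 + a*c := by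
        rw [div_le_iff₀ h1x0]
        nlinarith [mul_nonneg (mul_nonneg (mul_nonneg ha.le ha.le) hc.le) hx0.le]
      have : g x0 = a * (x0 + c) / (1 + a * x0) - Real.log (1 + a * x0) := rfl
      rw [this, hlx0]; linarith
    have := intermediate_value_Ioo' (le_of_lt hx0) hgcont
    have hmem : (0:ℝ) ∈ Ioo (g ((Real.exp (2 + a*c) - 1)/a)) (g 0) := ⟨hgneg, hg0⟩
    obtain ⟨xb, hxb, hxbeq⟩ := this hmem
    exact ⟨xb, hxb, hxbeq⟩
  have hxbpos : 0 < xb := hxbmem.1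
  -- sign of g
  have hgpos : ∀ {x : ℝ}, 0 ≤ x → x < xb → 0 < g x := by
    intro x hx hlt
    have := hganti (Set.mem_Ici.mpr hx) (Set.mem_Ici.mpr hxbpos.le) hlt
    rwa [hgxb] at this
  have hgneg : ∀ {x : ℝ}, xb < x → g x < 0 := fun {x} hlt => by
    have := hganti hxbpos.le (hxbpos.le.trans hlt.le) hlt
    rw [hgxb] at this; exact this
  -- u continuous on Ici 0
  have hucont : ∀ {s : Set ℝ}, s ⊆ Ici 0 → ContinuousOn u s := fun hs x hx =>
    (hderiv_u a c ha hc (hs hx)).continuousAt.continuousWithinAt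
  -- u strictly mono on Icc 0 xb
  have humono : StrictMonoOn u (Icc 0 xb) := by
    apply strictMonoOn_of_deriv_pos (convex_Icc 0 xb) (hucont (Icc_subset_Ici_self))
    intro x hx
    rw [interior_Icc] at hx
    rw [hderu hx.1.le]
    apply div_pos (hgpos hx.1.le hx.2)
    have := h2 hx.1.le
    positivity
  -- u strictly anti on Ici xb
  have huanti : StrictAntiOn u (Ici xb) := by
    apply strictAntiOn_of_deriv_neg (convex_Ici xb)
      (hucont (fun x hx => hxbpos.le.trans hx))
    intro x hx
    rw [interior_Ici] at hx
    have hx0 : (0:ℝ) ≤ x := (hxbpos.trans hx).le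
    rw [hderu hx0]
    apply div_neg_of_neg_of_pos (hgneg hx)
    have := h2 hx0
    positivity
  -- strict max
  have hstrict : ∀ y ∈ Ici (0:ℝ), y ≠ xb → u y < u xb := by
    intro y hy hne
    rcases lt_or_gt_of_ne hne with h | h
    · exact humono ⟨hy, h.le⟩ ⟨hxbpos.le, le_refl _⟩ h
    · exact huanti (Set.self_mem_Ici) h.le h
  have hmax : IsMaxOn u (Ici 0) xb := by
    intro y hy
    by_cases h : y = xb
    · simp [h]
    · exact le_of_lt (hstrict y hy h)
  refine ⟨?_, xb, hxbpos, hmax, ?_, ?_⟩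
  · -- pseudo-concavity
    intro x hx y hy hne hd
    rw [hderu hx] at hd
    have hden : 0 < Real.log 2 * (x + c) ^ 2 := by
      have := h2 hx; positivity
    rcases lt_or_gt_of_ne hne with hlt | hlt
    · -- x < y, so deriv ≤ 0, so g x ≤ 0, so x ≥ xb
      have hdx : g x / (Real.log 2 * (x + c) ^ 2) ≤ 0 := by
        by_contra hpos
        push_neg at hpos
        nlinarith
      have hgx : g x ≤ 0 := by
        by_contra hp; push_neg at hp
        exact absurd (div_pos hp hden) (not_lt.mpr hdx)
      have hxge : xb ≤ x := by
        by_contra hn; push_neg at hn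
        exact absurd (hgpos hx hn) (not_lt.mpr hgx)
      exact huanti hxge (hxge.trans hlt.le) hlt
    · -- y < x, so deriv ≥ 0, so g x ≥ 0, so x ≤ xb
      have hdx : 0 ≤ g x / (Real.log 2 * (x + c) ^ 2) := by
        by_contra hneg
        push_neg at hneg
        nlinarith
      have hgx : 0 ≤ g x := by
        by_contra hn; push_neg at hn
        exact absurd (div_neg_of_neg_of_pos hn hden) (not_lt.mpr hdx)
      have hxle : x ≤ xb := by
        by_contra hn; push_neg at hn
        exact absurd (hgneg hn) (not_lt.mpr hgx)
      exact humono ⟨hy, hlt.le.trans hxle⟩ ⟨hx, hxle⟩ hlt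
  · -- concavity on Icc 0 xb
    apply AntitoneOn.concaveOn_of_deriv (convex_Icc 0 xb) (hucont Icc_subset_Ici_self)
    · rw [interior_Icc]
      intro x hx
      exact ((hderiv_u a c ha hc hx.1.le).differentiableAt).differentiableWithinAt
    · rw [interior_Icc]
      intro x hx y hy hxy
      rw [hderu hx.1.le, hderu hy.1.le]
      have hgy : 0 ≤ g y := (hgpos hy.1.le hy.2).le
      have hgyx : g y ≤ g x := by
        rcases eq_or_lt_of_le hxy with rfl | h
        · exact le_rfl
        · exact (hganti (mem_Ici.mpr hx.1.le) (mem_Ici.mpr hy.1.le) h).le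
      have hd1 : 0 < Real.log 2 * (x + c) ^ 2 := by have := h2 hx.1.le; positivity
      have hd2 : 0 < Real.log 2 * (y + c) ^ 2 := by have := h2 hy.1.le; positivity
      have hdd : Real.log 2 * (x + c) ^ 2 ≤ Real.log 2 * (y + c) ^ 2 := by
        have hcc : 0 ≤ x + c := (h2 hx.1.le).le
        have : (x + c) ^ 2 ≤ (y + c) ^ 2 := by nlinarith
        exact mul_le_mul_of_nonneg_left this hl2.le
      exact div_le_div₀ (hgpos hx.1.le hx.2).le hgyx hd1 hdd
  · -- uniqueness
    intro y hy hymax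
    by_contra hne
    have h1' := hstrict y hy hne
    have h2' := hymax (mem_Ici.mpr hxbpos.le)
    simp only [hu] at h1' h2' ⊢
    exact absurd h2' (not_le.mpr h1')
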